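/- Let 0 < c < d and ℓ = (d − c)/d, and let F be the piecewise map on the closed right half-plane from the paper (formula (2.1)). Define the extension F̃ : ℂ → ℂ by F̃(z) = F(z) for Re z ≥ 0 and F̃(z) = −conj(F(−conj z)) for Re z ≤ 0. Then the two formulas agree on the imaginary axis, F̃ is continuous on ℂ, and F̃ maps the isosceles trapezoid with vertices −d, d, c + i, −c + i onto the rectangle [−d, d] × [0, 1]. -/

import Mathlib

open Complex ComplexConjugate

/-- The piecewise map `f₁` of the paper (formula (2.1)) on the closed right half-plane:
the trapezoid formula on `G₁`, the shear on `G₂`, the stretch on `G₃`, the translation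
on `G₄` and the identity on `G₅`. -/
noncomputable def trapMap (ℓ c d : ℝ) (z : ℂ) : ℂ :=
  if z.im ≤ 0 then z
  else if z.im ≤ 1 then
    (if z.re ≤ d * (1 - ℓ * z.im) then
      (4 * z + I * (ℓ : ℂ) * (z - conj z) ^ 2) / (4 + 2 * I * (ℓ : ℂ) * (z - conj z))
     else z - (I * ((d : ℂ) - (c : ℂ)) / 2) * (z - conj z))
  else
    (if z.re ≤ c then ((2 - (ℓ : ℂ)) * z + (ℓ : ℂ) * conj z) / (2 * (1 - (ℓ : ℂ)))
     else z + ((d : ℂ) - (c : ℂ)))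

/-- The extension of `f₁` to the whole plane by the mirror reflection
`z ↦ −conj(F(−conj z))` in the imaginary axis. -/
noncomputable def trapMapExt (ℓ c d : ℝ) (z : ℂ) : ℂ :=
  if 0 ≤ z.re then trapMap ℓ c d z else -conj (trapMap ℓ c d (-conj z))

/-- The real part of the trapezoid map, as an explicit continuous formula. -/
noncomputable def uu (ℓ d x y : ℝ) : ℝ :=
  max (min (x / (1 - ℓ * min (max y 0) 1)) (x + ℓ * d * min (max y 0) 1))
    (x - ℓ * d * min (max y 0) 1)

lemma uu_neg (ℓ d x y : ℝ) (hℓ0 : 0 ≤ ℓ) (hd : 0 ≤ d) :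
    uu ℓ d (-x) y = - uu ℓ d x y := by
  unfold uu
  have hm0 : 0 ≤ min (max y 0) 1 := le_min (le_max_right y 0) zero_le_one
  set m := min (max y 0) 1 with hm
  have hk : 0 ≤ ℓ * d * m := by positivity
  rw [neg_div, show (-x + ℓ * d * m) = -(x - ℓ * d * m) from by ring,
    show (-x - ℓ * d * m) = -(x + ℓ * d * m) from by ring,
    min_neg_neg, max_neg_neg, neg_inj, max_min_distrib_right,
    max_eq_left (by linarith : x - ℓ * d * m ≤ x + ℓ * d * m)]

lemma uu_eq_div (ℓ d x y : ℝ) (hℓ0 : 0 < ℓ) (hℓ1 : ℓ < 1) (hd : 0 < d)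
    (hy0 : 0 ≤ y) (hy1 : y ≤ 1)
    (hx1 : -(d * (1 - ℓ * y)) ≤ x) (hx2 : x ≤ d * (1 - ℓ * y)) :
    uu ℓ d x y = x / (1 - ℓ * y) := by
  have hm : min (max y 0) 1 = y := by rw [max_eq_left hy0]; exact min_eq_left hy1
  have ht : 0 < 1 - ℓ * y := by nlinarith
  have h1 : x / (1 - ℓ * y) ≤ x + ℓ * d * y := by
    rw [div_le_iff₀ ht]
    nlinarith [mul_nonneg (mul_nonneg hℓ0.le hy0)
      (by linarith : (0:ℝ) ≤ d * (1 - ℓ * y) - x)]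
  have h2 : x - ℓ * d * y ≤ x / (1 - ℓ * y) := by
    rw [le_div_iff₀ ht]
    nlinarith [mul_nonneg (mul_nonneg hℓ0.le hy0)
      (by linarith : (0:ℝ) ≤ x + d * (1 - ℓ * y))]
  unfold uu
  rw [hm, min_eq_left h1, max_eq_left h2]

lemma uu_eq_shear (ℓ d x y : ℝ) (hℓ0 : 0 < ℓ) (hℓ1 : ℓ < 1) (hd : 0 < d)
    (hy0 : 0 ≤ y) (hy1 : y ≤ 1) (hx : d * (1 - ℓ * y) ≤ x) :
    uu ℓ d x y = x + ℓ * d * y := by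
  have hm : min (max y 0) 1 = y := by rw [max_eq_left hy0]; exact min_eq_left hy1
  have ht : 0 < 1 - ℓ * y := by nlinarith
  have h1 : x + ℓ * d * y ≤ x / (1 - ℓ * y) := by
    rw [le_div_iff₀ ht]
    nlinarith [mul_nonneg (mul_nonneg hℓ0.le hy0)
      (by linarith : (0:ℝ) ≤ x - d * (1 - ℓ * y))]
  have h2 : x - ℓ * d * y ≤ x + ℓ * d * y := by
    nlinarith [mul_nonneg (mul_nonneg hℓ0.le hd.le) hy0]
  unfold uu
  rw [hm, min_eq_right h1, max_eq_left h2]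

lemma uu_high (ℓ d x y : ℝ) (hy : 1 ≤ y) : uu ℓ d x y = uu ℓ d x 1 := by
  unfold uu
  rw [show min (max y 0) 1 = 1 from by
        rw [max_eq_left (by linarith)]; exact min_eq_right hy,
      show min (max (1:ℝ) 0) 1 = 1 from by simp]

lemma trapMap_eval (c d ℓ : ℝ) (hc : 0 < c) (hcd : c < d) (hℓ : ℓ = (d - c) / d)
    (z : ℂ) (hx : 0 ≤ z.re) :
    trapMap ℓ c d z = ((uu ℓ d z.re z.im : ℝ) : ℂ) + (z.im : ℂ) * I := by
  have hd : 0 < d := hc.trans hcd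
  have hℓ0 : 0 < ℓ := by rw [hℓ]; exact div_pos (by linarith) hd
  have hℓ1 : ℓ < 1 := by rw [hℓ, div_lt_one hd]; linarith
  have hℓd : ℓ * d = d - c := by rw [hℓ]; field_simp
  have hcℓ : c = d * (1 - ℓ) := by nlinarith
  set x := z.re with hxdef
  set y := z.im with hydef
  have hzz : z = (x : ℂ) + (y : ℂ) * I := (Complex.re_add_im z).symm
  have hsub : z - conj z = ((2 * y : ℝ) : ℂ) * I := Complex.sub_conj z
  unfold trapMap
  split_ifs with h1 h2 h3 h4
  · -- y ≤ 0 : identity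
    rw [← hydef] at h1
    have hm : min (max y 0) 1 = 0 := by
      rw [max_eq_right h1]; exact min_eq_left zero_le_one
    have huu : uu ℓ d x y = x := by
      unfold uu; rw [hm]; simp
    rw [huu]; exact hzz
  · -- 0 < y ≤ 1, G₁
    rw [← hydef] at h1 h2
    rw [← hxdef, ← hydef] at h3
    push_neg at h1
    have ht : 0 < 1 - ℓ * y := by nlinarith
    have huu : uu ℓ d x y = x / (1 - ℓ * y) :=
      uu_eq_div ℓ d x y hℓ0 hℓ1 hd h1.le h2 (by nlinarith) h3
    have hnum : 4 * z + I * (ℓ : ℂ) * (((2 * y : ℝ) : ℂ) * I) ^ 2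
        = 4 * z - ((4 * ℓ * y ^ 2 : ℝ) : ℂ) * I := by
      push_cast
      linear_combination (4 * (ℓ : ℂ) * (y : ℂ) ^ 2 * I) * Complex.I_sq
    have hden : (4 : ℂ) + 2 * I * (ℓ : ℂ) * (((2 * y : ℝ) : ℂ) * I)
        = ((4 * (1 - ℓ * y) : ℝ) : ℂ) := by
      push_cast
      linear_combination (4 * (ℓ : ℂ) * (y : ℂ)) * Complex.I_sq
    have hdne : ((4 * (1 - ℓ * y) : ℝ) : ℂ) ≠ 0 := by
      rw [Complex.ofReal_ne_zero]; positivity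
    have htne : (1 : ℂ) - (ℓ : ℂ) * (y : ℂ) ≠ 0 := by
      rw [show (1 : ℂ) - (ℓ : ℂ) * (y : ℂ) = ((1 - ℓ * y : ℝ) : ℂ) from by push_cast; ring,
        Complex.ofReal_ne_zero]
      exact ht.ne'
    rw [hsub, hnum, hden, huu, div_eq_iff hdne, hzz]
    push_cast
    field_simp
    linear_combination (-(x:ℂ)) * mul_inv_cancel₀ (show (1:ℂ) - (y:ℂ) * (ℓ:ℂ) ≠ 0 by rw [mul_comm]; exact htne)
  · -- 0 < y ≤ 1, G₂
    rw [← hydef] at h1 h2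
    rw [← hxdef, ← hydef] at h3
    push_neg at h1 h3
    have huu : uu ℓ d x y = x + (d - c) * y := by
      rw [uu_eq_shear ℓ d x y hℓ0 hℓ1 hd h1.le h2 h3.le, hℓd]
    have hG2 : z - (I * ((d : ℂ) - (c : ℂ)) / 2) * (((2 * y : ℝ) : ℂ) * I)
        = z + (((d - c) * y : ℝ) : ℂ) := by
      push_cast
      linear_combination (-(((d : ℂ) - (c : ℂ)) * (y : ℂ))) * Complex.I_sq
    rw [hsub, hG2, huu, hzz]
    push_cast
    ring
  · -- y > 1, G₃
    rw [← hydef] at h1 h2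
    rw [← hxdef] at h4
    push_neg at h1 h2
    have ht : 0 < 1 - ℓ := by linarith
    have huu : uu ℓ d x y = x / (1 - ℓ) := by
      rw [uu_high ℓ d x y h2.le,
        uu_eq_div ℓ d x 1 hℓ0 hℓ1 hd zero_le_one le_rfl
          (by rw [mul_one]; nlinarith) (by rw [mul_one]; linarith [hcℓ ▸ h4]),
        mul_one]
    have hdne : (2 : ℂ) * (1 - (ℓ : ℂ)) ≠ 0 := by
      rw [show (2 : ℂ) * (1 - (ℓ : ℂ)) = ((2 * (1 - ℓ) : ℝ) : ℂ) from by push_cast; ring,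
        Complex.ofReal_ne_zero]
      positivity
    have htne : (1 : ℂ) - (ℓ : ℂ) ≠ 0 := by
      rw [show (1 : ℂ) - (ℓ : ℂ) = ((1 - ℓ : ℝ) : ℂ) from by push_cast; ring,
        Complex.ofReal_ne_zero]
      exact ht.ne'
    rw [huu, div_eq_iff hdne, hzz]
    simp only [map_add, map_mul, Complex.conj_ofReal, Complex.conj_I]
    push_cast
    field_simp
    ring
  · -- y > 1, G₄
    rw [← hydef] at h1 h2
    rw [← hxdef] at h4
    push_neg at h1 h2 h4
    have huu : uu ℓ d x y = x + (d - c) := by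
      rw [uu_high ℓ d x y h2.le,
        uu_eq_shear ℓ d x 1 hℓ0 hℓ1 hd zero_le_one le_rfl
          (by rw [mul_one]; linarith [hcℓ ▸ h4.le]),
        mul_one, hℓd]
    rw [huu, hzz]
    push_cast
    ring

lemma trapMapExt_eval (c d ℓ : ℝ) (hc : 0 < c) (hcd : c < d) (hℓ : ℓ = (d - c) / d)
    (z : ℂ) :
    trapMapExt ℓ c d z = ((uu ℓ d z.re z.im : ℝ) : ℂ) + (z.im : ℂ) * I := by
  have hd : 0 < d := hc.trans hcd
  have hℓ0 : 0 < ℓ := by rw [hℓ]; exact div_pos (by linarith) hd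
  unfold trapMapExt
  split_ifs with h
  · exact trapMap_eval c d ℓ hc hcd hℓ z h
  · push_neg at h
    have h1 : (0 : ℝ) ≤ (-conj z).re := by
      simp only [Complex.neg_re, Complex.conj_re]; linarith
    rw [trapMap_eval c d ℓ hc hcd hℓ _ h1]
    simp only [Complex.neg_re, Complex.conj_re, Complex.neg_im, Complex.conj_im, neg_neg]
    rw [uu_neg ℓ d z.re z.im hℓ0.le hd.le]
    push_cast
    simp only [map_add, map_neg, map_mul, Complex.conj_ofReal, Complex.conj_I]
    ring

/-- The two formulas defining the extension agree on the imaginary axis, the extension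
is continuous on `ℂ`, and it maps the isosceles trapezoid with vertices
`−d, d, c + i, −c + i` onto the rectangle `[−d, d] × [0, 1]`. -/
theorem stmt_19 (c d : ℝ) (hc : 0 < c) (hcd : c < d) (ℓ : ℝ) (hℓ : ℓ = (d - c) / d) :
    (∀ y : ℝ,
      trapMap ℓ c d ((y : ℂ) * I) = -conj (trapMap ℓ c d (-conj ((y : ℂ) * I)))) ∧
    Continuous (trapMapExt ℓ c d) ∧
    trapMapExt ℓ c d ''
        {z : ℂ | 0 ≤ z.im ∧ z.im ≤ 1 ∧ |z.re| ≤ d * (1 - ℓ * z.im)} =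
      {z : ℂ | -d ≤ z.re ∧ z.re ≤ d ∧ 0 ≤ z.im ∧ z.im ≤ 1} := by
  have hd : 0 < d := hc.trans hcd
  have hℓ0 : 0 < ℓ := by rw [hℓ]; exact div_pos (by linarith) hd
  have hℓ1 : ℓ < 1 := by rw [hℓ, div_lt_one hd]; linarith
  refine ⟨?_, ?_, ?_⟩
  · -- axis agreement
    intro y
    have hmir : -conj ((y : ℂ) * I) = (y : ℂ) * I := by
      simp [map_mul, Complex.conj_ofReal, Complex.conj_I]
    rw [hmir]
    have hre : ((y : ℂ) * I).re = 0 := by simp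
    have him : ((y : ℂ) * I).im = y := by simp
    rw [trapMap_eval c d ℓ hc hcd hℓ _ (le_of_eq hre.symm), hre, him]
    have huu0 : uu ℓ d 0 y = 0 := by
      have hm0 : 0 ≤ min (max y 0) 1 := le_min (le_max_right y 0) zero_le_one
      have hk : 0 ≤ ℓ * d * min (max y 0) 1 := by positivity
      unfold uu
      rw [zero_div, zero_add, zero_sub, min_eq_left hk,
        max_eq_left (neg_nonpos.mpr hk)]
    rw [huu0]
    simp [map_add, map_mul, Complex.conj_ofReal, Complex.conj_I]
  · -- continuity
    have key : trapMapExt ℓ c d =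
        fun z : ℂ => ((uu ℓ d z.re z.im : ℝ) : ℂ) + (z.im : ℂ) * I :=
      funext (trapMapExt_eval c d ℓ hc hcd hℓ)
    rw [key]
    have hm : Continuous fun z : ℂ => min (max z.im 0) 1 :=
      (Complex.continuous_im.max continuous_const).min continuous_const
    have hden : ∀ z : ℂ, 1 - ℓ * min (max z.im 0) 1 ≠ 0 := by
      intro z
      have h1 : min (max z.im 0) 1 ≤ 1 := min_le_right _ _
      have h0 : 0 ≤ min (max z.im 0) 1 := le_min (le_max_right _ _) zero_le_one
      nlinarith
    have huu : Continuous fun z : ℂ => uu ℓ d z.re z.im := by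
      unfold uu
      exact ((Complex.continuous_re.div
          (continuous_const.sub (continuous_const.mul hm)) hden).min
          (Complex.continuous_re.add (continuous_const.mul hm))).max
          (Complex.continuous_re.sub (continuous_const.mul hm))
    exact (Complex.continuous_ofReal.comp huu).add
      ((Complex.continuous_ofReal.comp Complex.continuous_im).mul continuous_const)
  · -- image of the trapezoid is the rectangle
    ext w
    simp only [Set.mem_image, Set.mem_setOf_eq]
    constructor
    · rintro ⟨z, ⟨hy0, hy1, hx⟩, rfl⟩
      obtain ⟨hx1, hx2⟩ := abs_le.mp hx
      have ht : 0 < 1 - ℓ * z.im := by nlinarith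
      rw [trapMapExt_eval c d ℓ hc hcd hℓ,
        uu_eq_div ℓ d z.re z.im hℓ0 hℓ1 hd hy0 hy1 hx1 hx2]
      refine ⟨?_, ?_, ?_, ?_⟩ <;>
        simp only [Complex.add_re, Complex.add_im, Complex.ofReal_re, Complex.ofReal_im,
          Complex.mul_re, Complex.mul_im, Complex.I_re, Complex.I_im, mul_zero, mul_one,
          zero_mul, sub_zero, add_zero, zero_add]
      · rw [le_div_iff₀ ht]; nlinarith
      · rw [div_le_iff₀ ht]; nlinarith
      · exact hy0
      · exact hy1
    · rintro ⟨h1, h2, h3, h4⟩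
      have ht : 0 < 1 - ℓ * w.im := by nlinarith
      have habs : |w.re * (1 - ℓ * w.im)| ≤ d * (1 - ℓ * w.im) := by
        rw [abs_mul, abs_of_pos ht]
        have h5 : |w.re| ≤ d := abs_le.mpr ⟨h1, h2⟩
        nlinarith [abs_nonneg w.re]
      refine ⟨((w.re * (1 - ℓ * w.im) : ℝ) : ℂ) + (w.im : ℂ) * I, ⟨?_, ?_, ?_⟩, ?_⟩
      · simpa using h3
      · simpa using h4
      · simp only [Complex.add_re, Complex.add_im, Complex.ofReal_re, Complex.ofReal_im,
          Complex.mul_re, Complex.mul_im, Complex.I_re, Complex.I_im, mul_zero, mul_one,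
          zero_mul, sub_zero, add_zero, zero_add]
        exact habs
      · rw [trapMapExt_eval c d ℓ hc hcd hℓ]
        simp only [Complex.add_re, Complex.add_im, Complex.ofReal_re, Complex.ofReal_im,
          Complex.mul_re, Complex.mul_im, Complex.I_re, Complex.I_im, mul_zero, mul_one,
          zero_mul, sub_zero, add_zero, zero_add]
        rw [uu_eq_div ℓ d _ _ hℓ0 hℓ1 hd h3 h4 (abs_le.mp habs).1 (abs_le.mp habs).2,
          mul_div_cancel_right₀ _ ht.ne']
        exact Complex.re_add_im w
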